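/- Equality case of the weighted Chebyshev integral inequality: let I = [a,b] ⊆ ℝ be an interval (infinite endpoints allowed), let f, g : I → ℝ be both non-decreasing or both non-increasing on I, and let w : I → ℝ be a positive measurable function with ∫_I w(x) dx = 1; assume f·w, g·w, f·g·w are Lebesgue integrable on I. Then ∫_I f g w dx = (∫_I f w dx)·(∫_I g w dx) if and only if f is constant almost everywhere on I or g is constant almost everywhere on I (with respect to Lebesgue measure on I). -/

import Mathlib

open MeasureTheory

lemma chebyshev_mul_nonneg_of_nonpos_nonpos {x y : ℝ} (hx : x ≤ 0) (hy : y ≤ 0) :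
    0 ≤ x * y := by nlinarith

lemma chebyshev_ae_const_of_null (I : Set ℝ) (hImeas : MeasurableSet I) (f : ℝ → ℝ) (c : ℝ)
    (h0 : volume.restrict I {x ∈ I | f x ≠ c} = 0) :
    ∀ᵐ x ∂(volume.restrict I), f x = c := by
  have h1 : ∀ᵐ x ∂(volume.restrict I), x ∈ I := ae_restrict_mem hImeas
  have h2 : ∀ᵐ x ∂(volume.restrict I), x ∉ {x ∈ I | f x ≠ c} :=
    measure_eq_zero_iff_ae_notMem.mp h0
  filter_upwards [h1, h2] with x hx hnx
  by_contra hfc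
  exact hnx ⟨hx, hfc⟩

/-- If `f` is not a.e. constant on `I` (w.r.t. `volume.restrict I`), then there is a
threshold `p` splitting `I` into two positive-measure pieces. -/
lemma chebyshev_exists_threshold (I : Set ℝ) (hImeas : MeasurableSet I) (f : ℝ → ℝ)
    (h : ¬ ∃ c : ℝ, ∀ᵐ x ∂(volume.restrict I), f x = c) :
    ∃ p : ℝ, 0 < volume.restrict I {x ∈ I | f x ≤ p} ∧
      0 < volume.restrict I {x ∈ I | p < f x} := by
  set ν := volume.restrict I with hν
  by_contra hne
  push_neg at hne
  have hdich : ∀ r : ℝ, ν {x ∈ I | f x ≤ r} = 0 ∨ ν {x ∈ I | r < f x} = 0 := by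
    intro r
    by_cases h1 : ν {x ∈ I | f x ≤ r} = 0
    · exact Or.inl h1
    · exact Or.inr (le_antisymm (hne r (pos_iff_ne_zero.mpr h1)) zero_le)
  have hmonoS : ∀ {r s : ℝ}, r ≤ s → {x ∈ I | f x ≤ r} ⊆ {x ∈ I | f x ≤ s} :=
    fun {r s} hrs x hx => ⟨hx.1, hx.2.trans hrs⟩
  apply h
  by_cases hTall : ∀ r : ℝ, ν {x ∈ I | f x ≤ r} = 0
  · have hI0 : ν I = 0 := by
      have hsub : I ⊆ ⋃ n : ℕ, {x ∈ I | f x ≤ (n : ℝ)} := by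
        intro x hx
        obtain ⟨n, hn⟩ := exists_nat_ge (f x)
        exact Set.mem_iUnion.mpr ⟨n, hx, hn⟩
      exact measure_mono_null hsub (measure_iUnion_null fun n => hTall n)
    exact ⟨0, chebyshev_ae_const_of_null I hImeas f 0
      (measure_mono_null (fun x hx => hx.1) hI0)⟩
  push_neg at hTall
  obtain ⟨r0, hr0⟩ := hTall
  by_cases hTne : ∃ r : ℝ, ν {x ∈ I | f x ≤ r} = 0
  · obtain ⟨r1, hr1⟩ := hTne
    set T := {r : ℝ | ν {x ∈ I | f x ≤ r} = 0} with hT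
    have hTdown : ∀ {t s : ℝ}, t ∈ T → s ≤ t → s ∈ T :=
      fun {t s} ht hst => measure_mono_null (hmonoS hst) ht
    have hTbdd : BddAbove T := by
      refine ⟨r0, fun t ht => ?_⟩
      by_contra hlt
      exact hr0 (hTdown ht (le_of_not_ge hlt))
    set c := sSup T with hc
    refine ⟨c, chebyshev_ae_const_of_null I hImeas f c ?_⟩
    have hlow : ν {x ∈ I | f x < c} = 0 := by
      have hsub : {x ∈ I | f x < c} ⊆ ⋃ n : ℕ, {x ∈ I | f x ≤ c - 1 / (n + 1)} := by
        intro x hx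
        obtain ⟨n, hn⟩ := exists_nat_one_div_lt (sub_pos.mpr hx.2)
        exact Set.mem_iUnion.mpr ⟨n, hx.1, by linarith⟩
      refine measure_mono_null hsub (measure_iUnion_null fun n => ?_)
      have hlt : c - 1 / ((n : ℝ) + 1) < c := by
        have : (0:ℝ) < 1 / ((n : ℝ) + 1) := by positivity
        linarith
      obtain ⟨t, htT, htlt⟩ := exists_lt_of_lt_csSup ⟨r1, hr1⟩ hlt
      exact hTdown htT htlt.le
    have hhigh : ν {x ∈ I | c < f x} = 0 := by
      have hsub : {x ∈ I | c < f x} ⊆ ⋃ n : ℕ, {x ∈ I | c + 1 / (n + 1) < f x} := by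
        intro x hx
        obtain ⟨n, hn⟩ := exists_nat_one_div_lt (sub_pos.mpr hx.2)
        exact Set.mem_iUnion.mpr ⟨n, hx.1, by linarith⟩
      refine measure_mono_null hsub (measure_iUnion_null fun n => ?_)
      have hnT : (c + 1 / ((n : ℝ) + 1)) ∉ T := by
        intro hmem
        have : c + 1 / ((n : ℝ) + 1) ≤ c := le_csSup hTbdd hmem
        have hp : (0:ℝ) < 1 / ((n : ℝ) + 1) := by positivity
        linarith
      rcases hdich (c + 1 / ((n : ℝ) + 1)) with h1 | h1
      · exact (hnT h1).elim
      · exact h1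
    have : {x ∈ I | f x ≠ c} ⊆ {x ∈ I | f x < c} ∪ {x ∈ I | c < f x} := by
      intro x hx
      rcases lt_or_gt_of_ne hx.2 with h1 | h1
      · exact Or.inl ⟨hx.1, h1⟩
      · exact Or.inr ⟨hx.1, h1⟩
    exact measure_mono_null this (measure_union_null hlow hhigh)
  · push_neg at hTne
    have hhighall : ∀ r : ℝ, ν {x ∈ I | r < f x} = 0 := by
      intro r
      rcases hdich r with h1 | h1
      · exact (hTne r h1).elim
      · exact h1
    have hI0 : ν I = 0 := by
      have hsub : I ⊆ ⋃ n : ℕ, {x ∈ I | (-(n : ℝ)) < f x} := by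
        intro x hx
        obtain ⟨n, hn⟩ := exists_nat_gt (-(f x))
        exact Set.mem_iUnion.mpr ⟨n, hx, by linarith⟩
      exact measure_mono_null hsub (measure_iUnion_null fun n => hhighall _)
    exact ⟨0, chebyshev_ae_const_of_null I hImeas f 0
      (measure_mono_null (fun x hx => hx.1) hI0)⟩

/-- Two "downward-closed" (w.r.t. a total relation `r`) subsets of `I` are nested. -/
lemma chebyshev_nested {α : Type*} (r : α → α → Prop) (htot : ∀ x y, r x y ∨ r y x)
    {I A C : Set α}
    (hA : ∀ ⦃x⦄, x ∈ A → ∀ ⦃z⦄, z ∈ I → r z x → z ∈ A)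
    (hC : ∀ ⦃x⦄, x ∈ C → ∀ ⦃z⦄, z ∈ I → r z x → z ∈ C)
    (hAI : A ⊆ I) (hCI : C ⊆ I) :
    A ⊆ C ∨ C ⊆ A := by
  by_cases hsub : A ⊆ C
  · exact Or.inl hsub
  · right
    obtain ⟨x, hxA, hxC⟩ := Set.not_subset.mp hsub
    intro z hzC
    rcases htot z x with hzx | hxz
    · exact hA hxA (hCI hzC) hzx
    · exact absurd (hC hzC (hAI hxA) hxz) hxC

theorem chebyshev_integral_equality_iff
    (a b : EReal) (I : Set ℝ) (hI : I = {x : ℝ | a ≤ (x : EReal) ∧ (x : EReal) ≤ b})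
    (f g w : ℝ → ℝ)
    (hmono : (MonotoneOn f I ∧ MonotoneOn g I) ∨ (AntitoneOn f I ∧ AntitoneOn g I))
    (hw_meas : Measurable w) (hw_pos : ∀ x ∈ I, 0 < w x)
    (hw_one : ∫ x in I, w x = 1)
    (hfw : IntegrableOn (fun x => f x * w x) I)
    (hgw : IntegrableOn (fun x => g x * w x) I)
    (hfgw : IntegrableOn (fun x => f x * g x * w x) I) :
    (∫ x in I, f x * g x * w x) = (∫ x in I, f x * w x) * (∫ x in I, g x * w x) ↔
      ((∃ c : ℝ, ∀ᵐ x ∂(volume.restrict I), f x = c) ∨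
        (∃ c : ℝ, ∀ᵐ x ∂(volume.restrict I), g x = c)) := by
  have hImeas : MeasurableSet I := by
    have hpre : I = ((↑) : ℝ → EReal) ⁻¹' (Set.Icc a b) := hI
    rw [hpre]
    exact (isClosed_Icc.preimage continuous_coe_real_ereal).measurableSet
  set ν := volume.restrict I with hν
  have hw_int : Integrable w ν := by
    by_contra hni
    rw [integral_undef hni] at hw_one
    exact one_ne_zero hw_one.symm
  set H : ℝ × ℝ → ℝ := fun p => (f p.1 - f p.2) * (g p.1 - g p.2) * (w p.1 * w p.2) with hH
  have hHeq : ∀ p : ℝ × ℝ, H p =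
      (f p.1 * g p.1 * w p.1) * w p.2 + w p.1 * (f p.2 * g p.2 * w p.2)
        - ((f p.1 * w p.1) * (g p.2 * w p.2) + (g p.1 * w p.1) * (f p.2 * w p.2)) := by
    intro p; simp only [hH]; ring
  have hHint : Integrable H (ν.prod ν) := by
    have h1 := ((hfgw.mul_prod hw_int).add (hw_int.mul_prod hfgw)).sub
      ((hfw.mul_prod hgw).add (hgw.mul_prod hfw))
    exact h1.congr (Filter.Eventually.of_forall fun p => (hHeq p).symm)
  have e1 : ∫ p : ℝ × ℝ, (f p.1 * g p.1 * w p.1) * w p.2 ∂(ν.prod ν)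
      = (∫ x, f x * g x * w x ∂ν) * ∫ x, w x ∂ν :=
    integral_prod_mul (fun x => f x * g x * w x) w
  have e2 : ∫ p : ℝ × ℝ, w p.1 * (f p.2 * g p.2 * w p.2) ∂(ν.prod ν)
      = (∫ x, w x ∂ν) * ∫ x, f x * g x * w x ∂ν :=
    integral_prod_mul w (fun x => f x * g x * w x)
  have e3 : ∫ p : ℝ × ℝ, (f p.1 * w p.1) * (g p.2 * w p.2) ∂(ν.prod ν)
      = (∫ x, f x * w x ∂ν) * ∫ x, g x * w x ∂ν :=
    integral_prod_mul (fun x => f x * w x) (fun x => g x * w x)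
  have e4 : ∫ p : ℝ × ℝ, (g p.1 * w p.1) * (f p.2 * w p.2) ∂(ν.prod ν)
      = (∫ x, g x * w x ∂ν) * ∫ x, f x * w x ∂ν :=
    integral_prod_mul (fun x => g x * w x) (fun x => f x * w x)
  have hHval : ∫ p, H p ∂(ν.prod ν) =
      2 * ((∫ x, f x * g x * w x ∂ν) - (∫ x, f x * w x ∂ν) * (∫ x, g x * w x ∂ν)) := by
    have h1 : ∫ p, H p ∂(ν.prod ν) = ∫ p : ℝ × ℝ,
        ((f p.1 * g p.1 * w p.1) * w p.2 + w p.1 * (f p.2 * g p.2 * w p.2)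
          - ((f p.1 * w p.1) * (g p.2 * w p.2) + (g p.1 * w p.1) * (f p.2 * w p.2)))
        ∂(ν.prod ν) :=
      integral_congr_ae (Filter.Eventually.of_forall fun p => hHeq p)
    have iAdd1 : Integrable (fun z : ℝ × ℝ =>
        f z.1 * g z.1 * w z.1 * w z.2 + w z.1 * (f z.2 * g z.2 * w z.2)) (ν.prod ν) :=
      (hfgw.mul_prod hw_int).add (hw_int.mul_prod hfgw)
    have iAdd2 : Integrable (fun z : ℝ × ℝ =>
        f z.1 * w z.1 * (g z.2 * w z.2) + g z.1 * w z.1 * (f z.2 * w z.2)) (ν.prod ν) :=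
      (hfw.mul_prod hgw).add (hgw.mul_prod hfw)
    have eS : ∫ z : ℝ × ℝ,
        ((f z.1 * g z.1 * w z.1 * w z.2 + w z.1 * (f z.2 * g z.2 * w z.2))
          - (f z.1 * w z.1 * (g z.2 * w z.2) + g z.1 * w z.1 * (f z.2 * w z.2))) ∂(ν.prod ν)
        = (∫ z : ℝ × ℝ, (f z.1 * g z.1 * w z.1 * w z.2 + w z.1 * (f z.2 * g z.2 * w z.2)) ∂(ν.prod ν))
          - ∫ z : ℝ × ℝ, (f z.1 * w z.1 * (g z.2 * w z.2) + g z.1 * w z.1 * (f z.2 * w z.2)) ∂(ν.prod ν) :=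
      integral_sub iAdd1 iAdd2
    have eA : ∫ z : ℝ × ℝ, (f z.1 * g z.1 * w z.1 * w z.2 + w z.1 * (f z.2 * g z.2 * w z.2)) ∂(ν.prod ν)
        = (∫ p : ℝ × ℝ, f p.1 * g p.1 * w p.1 * w p.2 ∂(ν.prod ν))
          + ∫ p : ℝ × ℝ, w p.1 * (f p.2 * g p.2 * w p.2) ∂(ν.prod ν) :=
      integral_add (hfgw.mul_prod hw_int) (hw_int.mul_prod hfgw)
    have eB : ∫ z : ℝ × ℝ, (f z.1 * w z.1 * (g z.2 * w z.2) + g z.1 * w z.1 * (f z.2 * w z.2)) ∂(ν.prod ν)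
        = (∫ p : ℝ × ℝ, f p.1 * w p.1 * (g p.2 * w p.2) ∂(ν.prod ν))
          + ∫ p : ℝ × ℝ, g p.1 * w p.1 * (f p.2 * w p.2) ∂(ν.prod ν) :=
      integral_add (hfw.mul_prod hgw) (hgw.mul_prod hfw)
    rw [h1, eS, eA, eB, e1, e2, e3, e4, hw_one]
    ring
  constructor
  · intro heq
    by_contra hcon
    rw [not_or] at hcon
    obtain ⟨hfc, hgc⟩ := hcon
    rw [hν] at hfc hgc
    obtain ⟨p, hApos, hBpos⟩ := chebyshev_exists_threshold I hImeas f hfc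
    obtain ⟨q, hCpos, hDpos⟩ := chebyshev_exists_threshold I hImeas g hgc
    set A := {x ∈ I | f x ≤ p} with hA
    set B := {x ∈ I | p < f x} with hB
    set C := {x ∈ I | g x ≤ q} with hC
    set D := {x ∈ I | q < g x} with hD
    have hACn : A ⊆ C ∨ C ⊆ A := by
      rcases hmono with ⟨hf, hg⟩ | ⟨hf, hg⟩
      · exact chebyshev_nested (· ≤ ·) le_total
          (fun x hx z hz hzx => ⟨hz, (hf hz hx.1 hzx).trans hx.2⟩)
          (fun x hx z hz hzx => ⟨hz, (hg hz hx.1 hzx).trans hx.2⟩)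
          (fun x hx => hx.1) (fun x hx => hx.1)
      · exact chebyshev_nested (fun s t => t ≤ s) (fun s t => (le_total t s))
          (fun x hx z hz hzx => ⟨hz, (hf hx.1 hz hzx).trans hx.2⟩)
          (fun x hx z hz hzx => ⟨hz, (hg hx.1 hz hzx).trans hx.2⟩)
          (fun x hx => hx.1) (fun x hx => hx.1)
    have hBDn : B ⊆ D ∨ D ⊆ B := by
      rcases hmono with ⟨hf, hg⟩ | ⟨hf, hg⟩
      · exact chebyshev_nested (fun s t => t ≤ s) (fun s t => (le_total t s))
          (fun x hx z hz hzx => ⟨hz, lt_of_lt_of_le hx.2 (hf hx.1 hz hzx)⟩)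
          (fun x hx z hz hzx => ⟨hz, lt_of_lt_of_le hx.2 (hg hx.1 hz hzx)⟩)
          (fun x hx => hx.1) (fun x hx => hx.1)
      · exact chebyshev_nested (· ≤ ·) le_total
          (fun x hx z hz hzx => ⟨hz, lt_of_lt_of_le hx.2 (hf hz hx.1 hzx)⟩)
          (fun x hx z hz hzx => ⟨hz, lt_of_lt_of_le hx.2 (hg hz hx.1 hzx)⟩)
          (fun x hx => hx.1) (fun x hx => hx.1)
    have hEpos : 0 < ν (A ∩ C) := by
      rcases hACn with h | h
      · rwa [Set.inter_eq_left.mpr h]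
      · rwa [Set.inter_eq_right.mpr h]
    have hFpos : 0 < ν (B ∩ D) := by
      rcases hBDn with h | h
      · rwa [Set.inter_eq_left.mpr h]
      · rwa [Set.inter_eq_right.mpr h]
    have hmemae : ∀ᵐ z ∂(ν.prod ν), z ∈ I ×ˢ I := by
      rw [hν, Measure.prod_restrict]
      exact ae_restrict_mem (hImeas.prod hImeas)
    have hposae : 0 ≤ᵐ[ν.prod ν] H := by
      filter_upwards [hmemae] with z hz
      have hx := hz.1
      have hy := hz.2
      have h1 : 0 ≤ (f z.1 - f z.2) * (g z.1 - g z.2) := by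
        rcases hmono with ⟨hf, hg⟩ | ⟨hf, hg⟩
        · rcases le_total z.1 z.2 with hle | hle
          · exact chebyshev_mul_nonneg_of_nonpos_nonpos (sub_nonpos.mpr (hf hx hy hle))
              (sub_nonpos.mpr (hg hx hy hle))
          · exact mul_nonneg (sub_nonneg.mpr (hf hy hx hle)) (sub_nonneg.mpr (hg hy hx hle))
        · rcases le_total z.1 z.2 with hle | hle
          · exact mul_nonneg (sub_nonneg.mpr (hf hx hy hle)) (sub_nonneg.mpr (hg hx hy hle))
          · exact chebyshev_mul_nonneg_of_nonpos_nonpos (sub_nonpos.mpr (hf hy hx hle))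
              (sub_nonpos.mpr (hg hy hx hle))
      exact mul_nonneg h1 (mul_nonneg (hw_pos _ hx).le (hw_pos _ hy).le)
    have hint0 : ∫ z, H z ∂(ν.prod ν) = 0 := by
      rw [hHval, heq]; ring
    have hae0 : H =ᵐ[ν.prod ν] 0 := (integral_eq_zero_iff_of_nonneg_ae hposae hHint).mp hint0
    have hnull : (ν.prod ν) {z | H z ≠ 0} = 0 := by
      have h' := hae0
      rw [Filter.EventuallyEq, ae_iff] at h'
      simpa using h'
    have hsub : (B ∩ D) ×ˢ (A ∩ C) ⊆ {z | H z ≠ 0} := by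
      rintro ⟨x, y⟩ ⟨⟨hxB, hxD⟩, hyA, hyC⟩
      have h1 : 0 < f x - f y := sub_pos.mpr (lt_of_le_of_lt hyA.2 hxB.2)
      have h2 : 0 < g x - g y := sub_pos.mpr (lt_of_le_of_lt hyC.2 hxD.2)
      have h3 : 0 < w x * w y := mul_pos (hw_pos _ hxB.1) (hw_pos _ hyA.1)
      exact ne_of_gt (mul_pos (mul_pos h1 h2) h3)
    have h0 : (ν.prod ν) ((B ∩ D) ×ˢ (A ∩ C)) = 0 := measure_mono_null hsub hnull
    rw [Measure.prod_prod] at h0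
    exact (mul_ne_zero hFpos.ne' hEpos.ne') h0
  · rintro (⟨c, hc⟩ | ⟨c, hc⟩)
    · have h1 : ∫ x, f x * w x ∂ν = c := by
        have h' : ∫ x, f x * w x ∂ν = ∫ x, c * w x ∂ν :=
          integral_congr_ae (hc.mono fun x hx => by simp only [hx])
        rw [h', integral_const_mul, hw_one, mul_one]
      have h2 : ∫ x, f x * g x * w x ∂ν = c * ∫ x, g x * w x ∂ν := by
        have h' : ∫ x, f x * g x * w x ∂ν = ∫ x, c * (g x * w x) ∂ν :=
          integral_congr_ae (hc.mono fun x hx => by simp only [hx]; ring)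
        rw [h', integral_const_mul]
      rw [h1, h2]
    · have h1 : ∫ x, g x * w x ∂ν = c := by
        have h' : ∫ x, g x * w x ∂ν = ∫ x, c * w x ∂ν :=
          integral_congr_ae (hc.mono fun x hx => by simp only [hx])
        rw [h', integral_const_mul, hw_one, mul_one]
      have h2 : ∫ x, f x * g x * w x ∂ν = c * ∫ x, f x * w x ∂ν := by
        have h' : ∫ x, f x * g x * w x ∂ν = ∫ x, c * (f x * w x) ∂ν :=
          integral_congr_ae (hc.mono fun x hx => by simp only [hx]; ring)
        rw [h', integral_const_mul]
      rw [h1, h2]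
      ring
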